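/- The parallel addition of symmetric positive semidefinite matrices is commutative: A₁(A₁+A₂)†A₂ = A₂(A₁+A₂)†A₁. -/

import Mathlib

/-- `B` is the Moore–Penrose pseudoinverse of `A`. -/
def IsMoorePenroseInv {d : ℕ} (A B : Matrix (Fin d) (Fin d) ℝ) : Prop :=
  A * B * A = A ∧ B * A * B = B ∧ (A * B).transpose = A * B ∧ (B * A).transpose = B * A

open Matrix
open scoped MatrixOrder

/-- If the sum of two PSD real matrices is zero, the first is zero. -/
lemma psd_add_eq_zero' {d : ℕ} {X Y : Matrix (Fin d) (Fin d) ℝ}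
    (hX : X.PosSemidef) (hY : Y.PosSemidef) (h : X + Y = 0) : X = 0 := by
  have hq : ∀ v : Fin d → ℝ, star v ⬝ᵥ X *ᵥ v = 0 := by
    intro v
    have hsum : star v ⬝ᵥ X *ᵥ v + star v ⬝ᵥ Y *ᵥ v = 0 := by
      rw [← dotProduct_add, ← Matrix.add_mulVec, h]
      simp
    have h1 := hX.dotProduct_mulVec_nonneg v
    have h2 := hY.dotProduct_mulVec_nonneg v
    linarith
  have hCherm : (CFC.sqrt X)ᴴ = CFC.sqrt X := (CFC.sqrt_nonneg X).isSelfAdjoint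
  have hCC : CFC.sqrt X * CFC.sqrt X = X := CFC.sqrt_mul_sqrt_self X hX.nonneg
  have hCv : ∀ v : Fin d → ℝ, CFC.sqrt X *ᵥ v = 0 := by
    intro v
    have h0 := hq v
    rw [← hCC] at h0
    nth_rewrite 1 [← hCherm] at h0
    rw [← Matrix.mulVec_mulVec, Matrix.dotProduct_mulVec, ← Matrix.star_mulVec] at h0
    exact dotProduct_star_self_eq_zero.mp h0
  have hC0 : CFC.sqrt X = 0 := by
    ext i j
    have := congrFun (hCv (Pi.single j 1)) i
    simpa [Matrix.mulVec_single] using this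
  rw [← hCC, hC0, Matrix.zero_mul]

/-- Main computation with the sum abstracted as a genuine variable `S`. -/
lemma parallelSum_comm_aux {d : ℕ} (A₁ A₂ S B : Matrix (Fin d) (Fin d) ℝ)
    (h₁ : A₁.PosSemidef) (h₂ : A₂.PosSemidef) (hS : S = A₁ + A₂)
    (hSBS : S * B * S = S) (hSB : (S * B)ᵀ = S * B) (hBS : (B * S)ᵀ = B * S) :
    A₁ * B * A₂ = A₂ * B * A₁ := by
  have hA₁t : A₁ᵀ = A₁ := by
    rw [← conjTranspose_eq_transpose_of_trivial]; exact h₁.1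
  have key : ∀ K : Matrix (Fin d) (Fin d) ℝ, K * S * Kᵀ = 0 → K * A₁ = 0 := by
    intro K hK
    have hKA1 : (K * A₁ * Kᵀ) + (K * A₂ * Kᵀ) = 0 := by
      rw [← hK, hS]; noncomm_ring
    have hA1K : K * A₁ * Kᵀ = 0 :=
      psd_add_eq_zero' (by simpa using h₁.mul_mul_conjTranspose_same K)
        (by simpa using h₂.mul_mul_conjTranspose_same K) hKA1
    have hCC : CFC.sqrt A₁ * CFC.sqrt A₁ = A₁ := CFC.sqrt_mul_sqrt_self A₁ h₁.nonneg
    have hCherm : (CFC.sqrt A₁)ᴴ = CFC.sqrt A₁ := (CFC.sqrt_nonneg A₁).isSelfAdjoint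
    have hKC : K * CFC.sqrt A₁ = 0 := by
      have h0 : (K * CFC.sqrt A₁) * (K * CFC.sqrt A₁)ᴴ = 0 := by
        rw [Matrix.conjTranspose_mul, hCherm]
        calc K * CFC.sqrt A₁ * (CFC.sqrt A₁ * Kᴴ) = K * (CFC.sqrt A₁ * CFC.sqrt A₁) * Kᴴ := by noncomm_ring
        _ = 0 := by
          rw [hCC]
          simpa using hA1K
      exact Matrix.self_mul_conjTranspose_eq_zero.mp h0
    calc K * A₁ = (K * CFC.sqrt A₁) * CFC.sqrt A₁ := by rw [Matrix.mul_assoc, hCC]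
    _ = 0 := by rw [hKC, Matrix.zero_mul]
  -- S * B * A₁ = A₁
  have h1 : S * B * A₁ = A₁ := by
    have hz := key (1 - S * B) ?_
    · have := sub_eq_zero.mp (by simpa [Matrix.sub_mul] using hz)
      simpa using this.symm
    · have hKt : (1 - S * B)ᵀ = 1 - S * B := by
        simp [Matrix.transpose_sub, hSB]
      rw [hKt]
      calc (1 - S * B) * S * (1 - S * B)
          = (S - S * B * S) * (1 - S * B) := by noncomm_ring
        _ = 0 := by rw [hSBS, sub_self, Matrix.zero_mul]
  -- A₁ * B * S = A₁
  have h2 : A₁ * (B * S) = A₁ := by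
    have hKt : (1 - B * S)ᵀ = 1 - B * S := by
      simp [Matrix.transpose_sub, hBS]
    have hz := key (1 - B * S) ?_
    · -- (1 - B*S) * A₁ = 0, transpose to get A₁ * (1 - B*S) = 0
      have h' := congrArg Matrix.transpose hz
      rw [Matrix.transpose_mul, hA₁t, hKt, Matrix.transpose_zero] at h'
      have := sub_eq_zero.mp (by simpa [Matrix.mul_sub] using h')
      simpa using this.symm
    · rw [hKt]
      calc (1 - B * S) * S * (1 - B * S)
          = (S - S * B * S) - B * (S * S - S * (S * B * S)) := by noncomm_ring
        _ = 0 := by rw [hSBS]; simp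
  -- conclude
  have e1 : A₁ * B * A₂ = A₁ - A₁ * B * A₁ := by
    have h3 : A₁ * B * A₁ + A₁ * B * A₂ = A₁ := by
      calc A₁ * B * A₁ + A₁ * B * A₂ = A₁ * (B * S) := by rw [hS]; noncomm_ring
      _ = A₁ := h2
    exact eq_sub_of_add_eq' h3
  have e2 : A₂ * B * A₁ = A₁ - A₁ * B * A₁ := by
    have h3 : A₁ * B * A₁ + A₂ * B * A₁ = A₁ := by
      calc A₁ * B * A₁ + A₂ * B * A₁ = S * B * A₁ := by rw [hS]; noncomm_ring
      _ = A₁ := h1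
    exact eq_sub_of_add_eq' h3
  rw [e1, e2]

theorem parallelSum_comm {d : ℕ} (A₁ A₂ B : Matrix (Fin d) (Fin d) ℝ)
    (h₁ : A₁.PosSemidef) (h₂ : A₂.PosSemidef)
    (hB : IsMoorePenroseInv (A₁ + A₂) B) :
    A₁ * B * A₂ = A₂ * B * A₁ := by
  obtain ⟨hSBS, -, hSB, hBS⟩ := hB
  exact parallelSum_comm_aux A₁ A₂ (A₁ + A₂) B h₁ h₂ rfl hSBS hSB hBS
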